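/- Let t₁ < t₂ < … < t_N be real numbers and y₁,…,y_N ∈ ℝ. Among all continuous piecewise-affine functions f : ℝ → ℝ with finitely many knots satisfying f(tₙ) = yₙ for all n, the connect-the-dots interpolant (affine on each [tₙ, tₙ₊₁], extended affinely beyond the endpoints with the adjacent slopes) minimizes the sum of the absolute values of the slope changes at the knots, and the minimum value equals Σ_{n=1}^{N−2} |mₙ₊₁ − mₙ| where mₙ = (yₙ₊₁ − yₙ)/(tₙ₊₁ − tₙ). -/

import Mathlib

open Set

lemma affine_hasDerivAt' (a c x : ℝ) : HasDerivAt (fun z : ℝ => a * z + c) a x := by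
  simpa using ((hasDerivAt_id x).const_mul a).add_const c

lemma derivWithin_Ici_eq' {f : ℝ → ℝ} {a c p v : ℝ} (hpv : p < v)
    (h : ∀ z ∈ Set.Icc p v, f z = a * z + c) :
    derivWithin f (Set.Ici p) p = a := by
  have H : HasDerivWithinAt f a (Set.Ici p) p := by
    refine ((affine_hasDerivAt' a c p).hasDerivWithinAt).congr_of_eventuallyEq ?_ ?_
    · filter_upwards [Icc_mem_nhdsGE_of_mem (left_mem_Ico.2 hpv)] with z hz using h z hz
    · exact h p ⟨le_rfl, hpv.le⟩
  exact H.derivWithin (uniqueDiffOn_Ici p p Set.self_mem_Ici)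

lemma derivWithin_Iic_eq' {f : ℝ → ℝ} {a c u p : ℝ} (hup : u < p)
    (h : ∀ z ∈ Set.Icc u p, f z = a * z + c) :
    derivWithin f (Set.Iic p) p = a := by
  have H : HasDerivWithinAt f a (Set.Iic p) p := by
    refine ((affine_hasDerivAt' a c p).hasDerivWithinAt).congr_of_eventuallyEq ?_ ?_
    · filter_upwards [Icc_mem_nhdsLE_of_mem (right_mem_Ioc.2 hup)] with z hz using h z hz
    · exact h p ⟨hup.le, le_rfl⟩
  exact H.derivWithin (uniqueDiffOn_Iic p p Set.self_mem_Iic)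

lemma affine_of_free' {f : ℝ → ℝ} {S : Finset ℝ} (hf : Continuous f)
    (hpa : ∀ x : ℝ, x ∉ (S : Set ℝ) →
      ∃ a c : ℝ, ∀ z ∈ connectedComponentIn ((S : Set ℝ))ᶜ x, f z = a * z + c)
    {u v : ℝ} (huv : u < v) (hfree : ∀ p ∈ S, p ∉ Set.Ioo u v) :
    ∃ a c : ℝ, ∀ z ∈ Set.Icc u v, f z = a * z + c := by
  set x := (u + v) / 2 with hx
  have hxm : x ∈ Set.Ioo u v := ⟨by simp only [hx]; linarith, by simp only [hx]; linarith⟩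
  have hxS : x ∉ (S : Set ℝ) := fun hmem => hfree x hmem hxm
  obtain ⟨a, c, h⟩ := hpa x hxS
  have hsub : Set.Ioo u v ⊆ connectedComponentIn ((S : Set ℝ))ᶜ x :=
    isPreconnected_Ioo.subset_connectedComponentIn hxm (fun z hz hzS => hfree z hzS hz)
  have heq : Set.EqOn f (fun z => a * z + c) (Set.Ioo u v) := fun z hz => h z (hsub hz)
  have hcl : Set.EqOn f (fun z => a * z + c) (closure (Set.Ioo u v)) :=
    heq.closure hf (by continuity)
  rw [closure_Ioo huv.ne] at hcl
  exact ⟨a, c, fun z hz => hcl hz⟩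

lemma maxdiff_bounds {u v p : ℝ} (h : u ≤ v) :
    0 ≤ max (v - p) 0 - max (u - p) 0 ∧ max (v - p) 0 - max (u - p) 0 ≤ v - u := by
  constructor
  · have : max (u - p) 0 ≤ max (v - p) 0 := max_le_max (by linarith) le_rfl
    linarith
  · rcases le_total (u - p) 0 with h1 | h1 <;> rcases le_total (v - p) 0 with h2 | h2
    · rw [max_eq_right h1, max_eq_right h2]; linarith
    · rw [max_eq_right h1, max_eq_left h2]; linarith
    · rw [max_eq_left h1, max_eq_right h2]; linarith
    · rw [max_eq_left h1, max_eq_left h2]; linarith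

lemma part2 (N : ℕ) (hN : 2 ≤ N) (t y : ℕ → ℝ)
    (ht : ∀ n, n + 1 < N → t n < t (n + 1))
    (m : ℕ → ℝ) (hm : ∀ n, m n = (y (n + 1) - y n) / (t (n + 1) - t n))
    (f : ℝ → ℝ) (S : Finset ℝ) (hf : Continuous f)
    (hi : ∀ n, n < N → f (t n) = y n)
    (hpa : ∀ x : ℝ, x ∉ (S : Set ℝ) →
      ∃ a c : ℝ, ∀ z ∈ connectedComponentIn ((S : Set ℝ))ᶜ x, f z = a * z + c) :
    ∑ n ∈ Finset.range (N - 2), |m (n + 1) - m n|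
      ≤ ∑ p ∈ S, |derivWithin f (Set.Ici p) p - derivWithin f (Set.Iic p) p| := by
  obtain ⟨M, rfl⟩ : ∃ M, N = M + 2 := ⟨N - 2, by omega⟩
  have hN2 : M + 2 - 2 = M := by omega
  rw [hN2]
  set jump : ℝ → ℝ := fun p => derivWithin f (Set.Ici p) p - derivWithin f (Set.Iic p) p
    with hjump
  set g : ℝ → ℝ := fun w => derivWithin f (Set.Ici w) w with hg
  -- a reference point to the left of everything
  set w₀ : ℝ := (insert (t 0) S).min' (Finset.insert_nonempty _ _) - 1 with hw₀
  have hw₀S : ∀ p ∈ S, w₀ < p := by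
    intro p hp
    have := Finset.min'_le (insert (t 0) S) p (Finset.mem_insert_of_mem hp)
    simp only [hw₀]; linarith
  have hw₀t : w₀ < t 0 := by
    have := Finset.min'_le (insert (t 0) S) (t 0) (Finset.mem_insert_self _ _)
    simp only [hw₀]; linarith
  -- monotonicity of t
  have tmono : ∀ i j, i ≤ j → j < M + 2 → t i ≤ t j := by
    intro i j hij hjN
    induction j with
    | zero => simp_all
    | succ k ihk =>
      by_cases h : i = k + 1
      · subst h; exact le_rfl
      · exact le_trans (ihk (by omega) (by omega)) (ht k hjN).le
  have hw₀tn : ∀ n, n < M + 2 → w₀ < t n :=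
    fun n hn => lt_of_lt_of_le hw₀t (tmono 0 n (Nat.zero_le n) hn)
  -- affine structure on S-free intervals
  have haff : ∀ u v : ℝ, u < v → (∀ p ∈ S, p ∉ Set.Ioo u v) →
      ∃ a : ℝ, (∀ z ∈ Set.Icc u v, ∀ w ∈ Set.Icc u v, f w - f z = a * (w - z)) ∧
        (∀ w ∈ Set.Ico u v, derivWithin f (Set.Ici w) w = a) ∧
        derivWithin f (Set.Iic v) v = a := by
    intro u v huv hfree
    obtain ⟨a, c, h⟩ := affine_of_free' hf hpa huv hfree
    refine ⟨a, ?_, ?_, ?_⟩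
    · intro z hz w hw; rw [h z hz, h w hw]; ring
    · intro w hw
      exact derivWithin_Ici_eq' hw.2 (fun z hz => h z ⟨le_trans hw.1 hz.1, hz.2⟩)
    · exact derivWithin_Iic_eq' huv h
  -- gap to the right of a point, given there are no S-points in (x, w']
  have hgapR : ∀ x w' : ℝ, x < w' → (∀ p ∈ S, p ∉ Set.Ioc x w') →
      ∃ v, w' < v ∧ ∀ p ∈ S, p ∉ Set.Ioo x v := by
    intro x w' hxw hfree
    by_cases hT : (S.filter (fun p => w' < p)).Nonempty
    · refine ⟨(S.filter (fun p => w' < p)).min' hT, ?_, ?_⟩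
      · exact (Finset.mem_filter.mp ((S.filter _).min'_mem hT)).2
      · intro p hp hmem
        have hpw : w' < p := by
          by_contra hle
          exact hfree p hp ⟨hmem.1, le_of_not_gt hle⟩
        exact absurd (Finset.min'_le _ p (Finset.mem_filter.mpr ⟨hp, hpw⟩))
          (not_le.mpr hmem.2)
    · refine ⟨w' + 1, lt_add_one w', ?_⟩
      intro p hp hmem
      have hpw : w' < p := by
        by_contra hle
        exact hfree p hp ⟨hmem.1, le_of_not_gt hle⟩
      exact hT ⟨p, Finset.mem_filter.mpr ⟨hp, hpw⟩⟩
  -- gap to the left of a point, bounded below by w₀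
  have hgapL : ∀ x : ℝ, w₀ < x →
      ∃ u, u < x ∧ w₀ ≤ u ∧ (∀ p ∈ S, p ∉ Set.Ioo u x) ∧ (∀ p ∈ S, p < x → p ≤ u) := by
    intro x hx
    set T := insert w₀ (S.filter (fun p => p < x)) with hT
    have hne : T.Nonempty := ⟨w₀, Finset.mem_insert_self _ _⟩
    have hmax_lt : T.max' hne < x := by
      rw [Finset.max'_lt_iff]
      intro b hb
      rcases Finset.mem_insert.mp hb with rfl | hb
      · exact hx
      · exact (Finset.mem_filter.mp hb).2
    refine ⟨T.max' hne, hmax_lt, Finset.le_max' T w₀ (Finset.mem_insert_self _ _), ?_, ?_⟩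
    · intro p hp hmem
      exact absurd (Finset.le_max' T p (Finset.mem_insert.mpr
        (Or.inr (Finset.mem_filter.mpr ⟨hp, hmem.2⟩)))) (not_le.mpr hmem.1)
    · intro p hp hpx
      exact Finset.le_max' T p (Finset.mem_insert.mpr (Or.inr (Finset.mem_filter.mpr ⟨hp, hpx⟩)))
  -- the slope at any non-knot point equals g w₀ plus the accumulated jumps
  have hJ : ∀ k : ℕ, ∀ w : ℝ, w₀ < w → w ∉ (S : Set ℝ) →
      (S.filter (fun p => p < w)).card ≤ k →
      g w = g w₀ + ∑ p ∈ S.filter (fun p => p < w), jump p := by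
    intro k
    induction k with
    | zero =>
      intro w hw hwS hcard
      have hemp : S.filter (fun p => p < w) = ∅ := Finset.card_eq_zero.mp (Nat.le_zero.mp hcard)
      rw [hemp, Finset.sum_empty, add_zero]
      -- free interval containing both w₀ and w
      have hfree : ∀ p ∈ S, p ∉ Set.Ioc (w₀ - 1) w := by
        intro p hp hmem
        rcases lt_or_eq_of_le hmem.2 with hlt | heq
        · have hmem2 : p ∈ S.filter (fun p => p < w) := Finset.mem_filter.mpr ⟨hp, hlt⟩
          rw [hemp] at hmem2; exact Finset.notMem_empty p hmem2
        · exact hwS (heq ▸ hp)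
      obtain ⟨v, hwv, hvfree⟩ := hgapR (w₀ - 1) w (by linarith) hfree
      obtain ⟨a, _, hga, _⟩ := haff (w₀ - 1) v (by linarith) hvfree
      show derivWithin f (Set.Ici w) w = derivWithin f (Set.Ici w₀) w₀
      rw [hga w ⟨by linarith, hwv⟩, hga w₀ ⟨by linarith, by linarith⟩]
    | succ k ih =>
      intro w hw hwS hcard
      by_cases hemp : S.filter (fun p => p < w) = ∅
      · rw [hemp, Finset.sum_empty, add_zero]
        have hfree : ∀ p ∈ S, p ∉ Set.Ioc (w₀ - 1) w := by
          intro p hp hmem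
          rcases lt_or_eq_of_le hmem.2 with hlt | heq
          · have hmem2 : p ∈ S.filter (fun p => p < w) := Finset.mem_filter.mpr ⟨hp, hlt⟩
            rw [hemp] at hmem2; exact Finset.notMem_empty p hmem2
          · exact hwS (heq ▸ hp)
        obtain ⟨v, hwv, hvfree⟩ := hgapR (w₀ - 1) w (by linarith) hfree
        obtain ⟨a, _, hga, _⟩ := haff (w₀ - 1) v (by linarith) hvfree
        show derivWithin f (Set.Ici w) w = derivWithin f (Set.Ici w₀) w₀
        rw [hga w ⟨by linarith, hwv⟩, hga w₀ ⟨by linarith, by linarith⟩]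
      · set F := S.filter (fun p => p < w) with hF
        have hFne : F.Nonempty := Finset.nonempty_of_ne_empty hemp
        set p := F.max' hFne with hp
        have hpF : p ∈ F := F.max'_mem hFne
        have hpS : p ∈ S := (Finset.mem_filter.mp hpF).1
        have hpw : p < w := (Finset.mem_filter.mp hpF).2
        have hw₀p : w₀ < p := hw₀S p hpS
        -- a free interval immediately to the left of p
        obtain ⟨q, hqp, hq0, hqfree, hqub⟩ := hgapL p hw₀p
        set l := (q + p) / 2 with hl
        have hql : q < l := by simp only [hl]; linarith
        have hlp : l < p := by simp only [hl]; linarith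
        have hlw₀ : w₀ < l := lt_of_le_of_lt hq0 hql
        have hlS : l ∉ (S : Set ℝ) := by
          intro hmem
          rcases lt_trichotomy l p with hc | hc | hc
          · exact absurd (hqub l hmem hc) (not_le.mpr hql)
          · exact absurd hc (ne_of_lt hlp)
          · exact absurd hc (not_lt.mpr hlp.le)
        -- the filter at l is F minus p
        have hfl : S.filter (fun x => x < l) = F.erase p := by
          ext s
          simp only [Finset.mem_filter, Finset.mem_erase, hF]
          constructor
          · rintro ⟨hsS, hsl⟩
            have hsp : s < p := lt_trans hsl hlp
            exact ⟨ne_of_lt hsp, hsS, lt_trans hsp hpw⟩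
          · rintro ⟨hsne, hsS, hsw⟩
            refine ⟨hsS, ?_⟩
            have hsp : s < p := by
              rcases lt_or_ge s p with hc | hc
              · exact hc
              · rcases eq_or_lt_of_le hc with hc2 | hc2
                · exact absurd hc2.symm hsne
                · exact absurd (Finset.le_max' F s (Finset.mem_filter.mpr ⟨hsS, hsw⟩))
                    (not_le.mpr (hp ▸ hc2))
            exact lt_of_le_of_lt (hqub s hsS hsp) hql
        have hIH : g l = g w₀ + ∑ x ∈ F.erase p, jump x := by
          have hcard' : (S.filter (fun x => x < l)).card ≤ k := by
            rw [hfl, Finset.card_erase_of_mem hpF]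
            omega
          rw [← hfl]
          exact ih l hlw₀ hlS hcard'
        -- left slope at p
        have hlpfree : ∀ s ∈ S, s ∉ Set.Ioo l p := by
          intro s hsS hmem
          exact absurd (hqub s hsS hmem.2) (not_le.mpr (lt_trans hql hmem.1))
        obtain ⟨a₁, _, hga₁, hIic₁⟩ := haff l p hlp hlpfree
        -- right slope at p, on an interval containing w
        have hpwfree : ∀ s ∈ S, s ∉ Set.Ioc p w := by
          intro s hsS hmem
          rcases lt_or_eq_of_le hmem.2 with hlt | heq
          · exact absurd (Finset.le_max' F s (Finset.mem_filter.mpr ⟨hsS, hlt⟩))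
              (not_le.mpr (hp ▸ hmem.1))
          · exact hwS (heq ▸ hsS)
        obtain ⟨v, hwv, hvfree⟩ := hgapR p w hpw hpwfree
        obtain ⟨a₂, _, hga₂, _⟩ := haff p v (lt_trans hpw hwv) hvfree
        have hgw : g w = a₂ := hga₂ w ⟨hpw.le, hwv⟩
        have hIci₂ : derivWithin f (Set.Ici p) p = a₂ := hga₂ p ⟨le_rfl, lt_trans hpw hwv⟩
        have hgl : g l = a₁ := hga₁ l ⟨le_rfl, hlp⟩
        have hjp : jump p = a₂ - a₁ := by
          show derivWithin f (Set.Ici p) p - derivWithin f (Set.Iic p) p = a₂ - a₁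
          rw [hIci₂, hIic₁]
        rw [hgw, ← Finset.sum_erase_add F jump hpF, hjp]
        rw [hgl] at hIH
        linarith
  -- positive and negative parts of the jumps
  set Jp : ℝ → ℝ := fun p => max (jump p) 0 with hJpdef
  set Jm : ℝ → ℝ := fun p => max (-jump p) 0 with hJmdef
  set Fp : ℝ → ℝ := fun x => ∑ p ∈ S, Jp p * max (x - p) 0 with hFpdef
  set Fm : ℝ → ℝ := fun x => ∑ p ∈ S, Jm p * max (x - p) 0 with hFmdef
  set D : ℝ → ℝ := fun x => f x - (g w₀ * x + Fp x - Fm x) with hDdef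
  have hJp0 : ∀ p, 0 ≤ Jp p := fun p => le_max_right _ _
  have hJm0 : ∀ p, 0 ≤ Jm p := fun p => le_max_right _ _
  -- difference of the cumulative functions over a free interval
  have hFdiff : ∀ (J : ℝ → ℝ) (u v : ℝ), u < v → (∀ p ∈ S, p ∉ Set.Ioo u v) →
      (∑ p ∈ S, J p * max (v - p) 0) - (∑ p ∈ S, J p * max (u - p) 0)
        = (∑ p ∈ S.filter (fun p => p < (u + v) / 2), J p) * (v - u) := by
    intro J u v huv hfree
    rw [Finset.sum_mul, Finset.sum_filter, ← Finset.sum_sub_distrib]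
    refine Finset.sum_congr rfl (fun p hp => ?_)
    by_cases hpu : p ≤ u
    · rw [if_pos (by linarith : p < (u + v) / 2), max_eq_left (by linarith),
        max_eq_left (by linarith)]
      ring
    · have hpv : v ≤ p := by
        by_contra hcon
        exact hfree p hp ⟨lt_of_not_ge hpu, lt_of_not_ge hcon⟩
      rw [if_neg (by push_neg; linarith : ¬ p < (u + v) / 2), max_eq_right (by linarith),
        max_eq_right (by linarith)]
      ring
  -- D is constant across free intervals
  have hBbase : ∀ u v : ℝ, w₀ ≤ u → u < v → (∀ p ∈ S, p ∉ Set.Ioo u v) → D u = D v := by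
    intro u v hw₀u huv hfree
    have hxu : u < (u + v) / 2 := by linarith
    have hxv : (u + v) / 2 < v := by linarith
    have hxS : (u + v) / 2 ∉ (S : Set ℝ) := fun hmem => hfree _ hmem ⟨hxu, hxv⟩
    obtain ⟨a, hdiff, hga, _⟩ := haff u v huv hfree
    have hax : g ((u + v) / 2) = a := hga _ ⟨hxu.le, hxv⟩
    have hKey := hJ (S.filter (fun p => p < (u + v) / 2)).card ((u + v) / 2)
      (lt_of_le_of_lt hw₀u hxu) hxS le_rfl
    have ha : a = g w₀ + ∑ p ∈ S.filter (fun p => p < (u + v) / 2), jump p := by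
      rw [← hax]; exact hKey
    have hsplit : ∑ p ∈ S.filter (fun p => p < (u + v) / 2), jump p
        = (∑ p ∈ S.filter (fun p => p < (u + v) / 2), Jp p)
          - (∑ p ∈ S.filter (fun p => p < (u + v) / 2), Jm p) := by
      rw [← Finset.sum_sub_distrib]
      refine Finset.sum_congr rfl (fun p _ => ?_)
      exact (max_zero_sub_max_neg_zero_eq_self (jump p)).symm
    have hfv : f v - f u = a * (v - u) := hdiff u ⟨le_rfl, huv.le⟩ v ⟨huv.le, le_rfl⟩
    have hFpd : Fp v - Fp u
        = (∑ p ∈ S.filter (fun p => p < (u + v) / 2), Jp p) * (v - u) := hFdiff Jp u v huv hfree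
    have hFmd : Fm v - Fm u
        = (∑ p ∈ S.filter (fun p => p < (u + v) / 2), Jm p) * (v - u) := hFdiff Jm u v huv hfree
    show f u - (g w₀ * u + Fp u - Fm u) = f v - (g w₀ * v + Fp v - Fm v)
    linear_combination -hfv + hFpd - hFmd - (v - u) * ha - (v - u) * hsplit
  -- D is globally constant to the right of w₀
  have hC : ∀ k : ℕ, ∀ u v : ℝ, w₀ ≤ u → u < v →
      (S.filter (fun p => u < p ∧ p < v)).card ≤ k → D u = D v := by
    intro k
    induction k with
    | zero =>
      intro u v hw₀u huv hcard
      refine hBbase u v hw₀u huv (fun p hp hmem => ?_)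
      have h2 : p ∈ S.filter (fun p => u < p ∧ p < v) :=
        Finset.mem_filter.mpr ⟨hp, hmem.1, hmem.2⟩
      have := Finset.card_pos.mpr ⟨p, h2⟩
      omega
    | succ k ih =>
      intro u v hw₀u huv hcard
      by_cases hemp : S.filter (fun p => u < p ∧ p < v) = ∅
      · refine hBbase u v hw₀u huv (fun p hp hmem => ?_)
        have h2 : p ∈ S.filter (fun p => u < p ∧ p < v) :=
          Finset.mem_filter.mpr ⟨hp, hmem.1, hmem.2⟩
        rw [hemp] at h2
        exact Finset.notMem_empty p h2
      · set F := S.filter (fun p => u < p ∧ p < v) with hF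
        have hFne : F.Nonempty := Finset.nonempty_of_ne_empty hemp
        set p := F.max' hFne with hp
        have hpF : p ∈ F := F.max'_mem hFne
        obtain ⟨hpS, hup, hpv⟩ : p ∈ S ∧ u < p ∧ p < v := by
          have := Finset.mem_filter.mp hpF
          exact ⟨this.1, this.2.1, this.2.2⟩
        have h1 : D u = D p := by
          refine ih u p hw₀u hup ?_
          have hsub : S.filter (fun q => u < q ∧ q < p) ⊆ F.erase p := by
            intro s hs
            have hs' := Finset.mem_filter.mp hs
            exact Finset.mem_erase.mpr ⟨ne_of_lt hs'.2.2,
              Finset.mem_filter.mpr ⟨hs'.1, hs'.2.1, lt_trans hs'.2.2 hpv⟩⟩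
          calc (S.filter (fun q => u < q ∧ q < p)).card
              ≤ (F.erase p).card := Finset.card_le_card hsub
            _ = F.card - 1 := Finset.card_erase_of_mem hpF
            _ ≤ k := by omega
        have h2 : D p = D v := by
          refine hBbase p v (le_trans hw₀u hup.le) hpv (fun s hs hmem => ?_)
          have hsF : s ∈ F := Finset.mem_filter.mpr ⟨hs, lt_trans hup hmem.1, hmem.2⟩
          exact absurd (Finset.le_max' F s hsF) (not_le.mpr hmem.1)
        rw [h1, h2]
  -- secant slopes of the cumulative functions over data intervals
  set σp : ℕ → ℝ := fun n => (Fp (t (n + 1)) - Fp (t n)) / (t (n + 1) - t n) with hσpdef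
  set σm : ℕ → ℝ := fun n => (Fm (t (n + 1)) - Fm (t n)) / (t (n + 1) - t n) with hσmdef
  have hmdecomp : ∀ n, n + 1 < M + 2 → m n = g w₀ + σp n - σm n := by
    intro n hn
    have hΔ : (0:ℝ) < t (n + 1) - t n := sub_pos.mpr (ht n hn)
    have hDn : D (t n) = D (t (n + 1)) :=
      hC (S.filter (fun p => t n < p ∧ p < t (n + 1))).card (t n) (t (n + 1))
        (le_of_lt (hw₀tn n (by omega))) (ht n hn) le_rfl
    have hfd : f (t (n + 1)) - f (t n)
        = g w₀ * (t (n + 1) - t n) + (Fp (t (n + 1)) - Fp (t n))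
          - (Fm (t (n + 1)) - Fm (t n)) := by
      have h2 : f (t n) - (g w₀ * t n + Fp (t n) - Fm (t n))
          = f (t (n + 1)) - (g w₀ * t (n + 1) + Fp (t (n + 1)) - Fm (t (n + 1))) := hDn
      linarith
    rw [hm n, ← hi n (by omega), ← hi (n + 1) (by omega), hfd]
    show _ = g w₀ + (Fp (t (n + 1)) - Fp (t n)) / (t (n + 1) - t n)
      - (Fm (t (n + 1)) - Fm (t n)) / (t (n + 1) - t n)
    field_simp
  -- convexity of the cumulative functions
  have hconvGen : ∀ (T : Finset ℝ) (J : ℝ → ℝ), (∀ p, 0 ≤ J p) →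
      ConvexOn ℝ Set.univ (fun x => ∑ p ∈ T, J p * max (x - p) 0) := by
    intro T J hJpos
    classical
    induction T using Finset.induction_on with
    | empty => simpa using convexOn_const (0:ℝ) convex_univ
    | @insert a T' ha ih =>
      have h1 : ConvexOn ℝ Set.univ (fun x : ℝ => J a * max (x - a) 0) := by
        have hid : ConvexOn ℝ (Set.univ : Set ℝ) (fun x : ℝ => x - a) := by
          have := (convexOn_id (convex_univ (𝕜 := ℝ) (E := ℝ))).add
            (convexOn_const (-a) convex_univ)
          simpa [sub_eq_add_neg, Pi.add_def] using this
        have h0 : ConvexOn ℝ (Set.univ : Set ℝ) (fun _ : ℝ => (0:ℝ)) :=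
          convexOn_const 0 convex_univ
        have := (hid.sup h0).smul (hJpos a)
        simpa [Pi.sup_apply, smul_eq_mul, max_def] using this
      have heq : (fun x : ℝ => ∑ p ∈ insert a T', J p * max (x - p) 0)
          = fun x : ℝ => J a * max (x - a) 0 + ∑ p ∈ T', J p * max (x - p) 0 :=
        funext fun x => Finset.sum_insert ha
      rw [heq]
      exact h1.add ih
  -- bounds for the increments of the cumulative functions
  have hFbound : ∀ (J : ℝ → ℝ), (∀ p, 0 ≤ J p) → ∀ u v : ℝ, u ≤ v →
      0 ≤ (∑ p ∈ S, J p * max (v - p) 0) - (∑ p ∈ S, J p * max (u - p) 0) ∧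
      (∑ p ∈ S, J p * max (v - p) 0) - (∑ p ∈ S, J p * max (u - p) 0)
        ≤ (∑ p ∈ S, J p) * (v - u) := by
    intro J hJpos u v huv
    constructor
    · rw [← Finset.sum_sub_distrib]
      refine Finset.sum_nonneg (fun p _ => ?_)
      have h := maxdiff_bounds (p := p) huv
      nlinarith [hJpos p, h.1]
    · rw [← Finset.sum_sub_distrib, Finset.sum_mul]
      refine Finset.sum_le_sum (fun p _ => ?_)
      have h := maxdiff_bounds (p := p) huv
      nlinarith [hJpos p, h.1, h.2]
  -- monotonicity of the secant slopes
  have hσp_mono : ∀ n, n + 2 < M + 2 → σp n ≤ σp (n + 1) := by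
    intro n hn
    exact (hconvGen S Jp hJp0).slope_mono_adjacent (Set.mem_univ (t n))
      (Set.mem_univ (t (n + 2))) (ht n (by omega)) (ht (n + 1) (by omega))
  have hσm_mono : ∀ n, n + 2 < M + 2 → σm n ≤ σm (n + 1) := by
    intro n hn
    exact (hconvGen S Jm hJm0).slope_mono_adjacent (Set.mem_univ (t n))
      (Set.mem_univ (t (n + 2))) (ht n (by omega)) (ht (n + 1) (by omega))
  have hΔ0 : (0:ℝ) < t 1 - t 0 := sub_pos.mpr (ht 0 (by omega))
  have hΔM : (0:ℝ) < t (M + 1) - t M := sub_pos.mpr (ht M (by omega))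
  have hσp0 : 0 ≤ σp 0 := div_nonneg (hFbound Jp hJp0 (t 0) (t 1) (by linarith)).1 hΔ0.le
  have hσm0 : 0 ≤ σm 0 := div_nonneg (hFbound Jm hJm0 (t 0) (t 1) (by linarith)).1 hΔ0.le
  have hσpM : σp M ≤ ∑ p ∈ S, Jp p := by
    rw [hσpdef]
    rw [div_le_iff₀ hΔM]
    exact (hFbound Jp hJp0 (t M) (t (M + 1)) (by linarith)).2
  have hσmM : σm M ≤ ∑ p ∈ S, Jm p := by
    rw [hσmdef]
    rw [div_le_iff₀ hΔM]
    exact (hFbound Jm hJm0 (t M) (t (M + 1)) (by linarith)).2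
  -- final chain
  calc ∑ n ∈ Finset.range M, |m (n + 1) - m n|
      = ∑ n ∈ Finset.range M, |(σp (n + 1) - σp n) - (σm (n + 1) - σm n)| := by
        refine Finset.sum_congr rfl (fun n hn => ?_)
        have hnM := Finset.mem_range.mp hn
        rw [hmdecomp n (by omega), hmdecomp (n + 1) (by omega)]
        congr 1
        ring
    _ ≤ ∑ n ∈ Finset.range M, ((σp (n + 1) - σp n) + (σm (n + 1) - σm n)) := by
        refine Finset.sum_le_sum (fun n hn => ?_)
        have hnM := Finset.mem_range.mp hn
        have ha := hσp_mono n (by omega)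
        have hb := hσm_mono n (by omega)
        exact abs_le.mpr ⟨by linarith, by linarith⟩
    _ = (σp M - σp 0) + (σm M - σm 0) := by
        rw [Finset.sum_add_distrib, Finset.sum_range_sub (fun n => σp n),
          Finset.sum_range_sub (fun n => σm n)]
    _ ≤ (∑ p ∈ S, Jp p) + (∑ p ∈ S, Jm p) := by linarith
    _ = ∑ p ∈ S, |derivWithin f (Set.Ici p) p - derivWithin f (Set.Iic p) p| := by
        rw [← Finset.sum_add_distrib]
        refine Finset.sum_congr rfl (fun p _ => ?_)
        exact max_zero_add_max_neg_zero_eq_abs_self (jump p)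

lemma part1 (N : ℕ) (hN : 2 ≤ N) (t y : ℕ → ℝ)
    (ht : ∀ n, n + 1 < N → t n < t (n + 1))
    (m : ℕ → ℝ)
    (f : ℝ → ℝ)
    (hp : ∀ n, n + 1 < N → ∀ x ∈ Set.Icc (t n) (t (n + 1)), f x = y n + m n * (x - t n))
    (hl : ∀ x ∈ Set.Iic (t 0), f x = y 0 + m 0 * (x - t 0))
    (hr : ∀ x ∈ Set.Ici (t (N - 1)), f x = y (N - 1) + m (N - 2) * (x - t (N - 1))) :
    ∑ p ∈ Finset.image t (Finset.range N),
        |derivWithin f (Set.Ici p) p - derivWithin f (Set.Iic p) p|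
      = ∑ n ∈ Finset.range (N - 2), |m (n + 1) - m n| := by
  obtain ⟨M, rfl⟩ : ∃ M, N = M + 2 := ⟨N - 2, by omega⟩
  have hN1 : M + 2 - 1 = M + 1 := by omega
  have hN2 : M + 2 - 2 = M := by omega
  rw [hN1] at hr; rw [hN2] at hr ⊢
  -- strict monotonicity of t on the range
  have tmono : ∀ i j, i < j → j < M + 2 → t i < t j := by
    intro i j hij hjN
    induction j with
    | zero => omega
    | succ k ihk =>
      rcases Nat.lt_succ_iff_lt_or_eq.mp hij with h | h
      · exact (ihk h (by omega)).trans (ht k (by omega))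
      · subst h; exact ht i hjN
  -- one-sided derivatives
  have hR : ∀ n, n + 1 < M + 2 → derivWithin f (Set.Ici (t n)) (t n) = m n := by
    intro n hn
    refine derivWithin_Ici_eq' (ht n hn) (a := m n) (c := y n - m n * t n) ?_
    intro z hz; rw [hp n hn z hz]; ring
  have hRlast : derivWithin f (Set.Ici (t (M + 1))) (t (M + 1)) = m M := by
    refine derivWithin_Ici_eq' (lt_add_one (t (M + 1))) (a := m M) (c := y (M + 1) - m M * t (M + 1)) ?_
    intro z hz; rw [hr z (le_trans hz.1 le_rfl)]; ring
  have hL0 : derivWithin f (Set.Iic (t 0)) (t 0) = m 0 := by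
    refine derivWithin_Iic_eq' (sub_lt_self (t 0) one_pos) (a := m 0) (c := y 0 - m 0 * t 0) ?_
    intro z hz; rw [hl z hz.2]; ring
  have hL : ∀ n, 0 < n → n < M + 2 → derivWithin f (Set.Iic (t n)) (t n) = m (n - 1) := by
    intro n hn0 hnN
    have h1 : (n - 1) + 1 = n := by omega
    have h2 : (n - 1) + 1 < M + 2 := by omega
    refine derivWithin_Iic_eq' (u := t (n - 1)) ?_ (a := m (n - 1)) (c := y (n - 1) - m (n - 1) * t (n - 1)) ?_
    · have := ht (n - 1) h2; rwa [h1] at this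
    · intro z hz
      have := hp (n - 1) h2 z (by rwa [h1])
      rw [this]; ring
  -- value of each term
  set φ : ℕ → ℝ := fun n => if n = 0 ∨ n = M + 1 then 0 else |m n - m (n - 1)| with hφ
  have hterm : ∀ n < M + 2,
      |derivWithin f (Set.Ici (t n)) (t n) - derivWithin f (Set.Iic (t n)) (t n)| = φ n := by
    intro n hn
    rcases Nat.eq_zero_or_pos n with rfl | hn0
    · rw [hR 0 (by omega), hL0]; simp [hφ]
    by_cases h2 : n = M + 1
    · subst h2
      rw [hRlast, hL (M + 1) (by omega) (by omega)]
      simp [hφ]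
    · rw [hR n (by omega), hL n hn0 hn]
      have hnor : ¬(n = 0 ∨ n = M + 1) := by omega
      simp [hφ, hnor]
  have hinj : ∀ i ∈ Finset.range (M + 2), ∀ j ∈ Finset.range (M + 2), t i = t j → i = j := by
    intro i hi j hj hij
    by_contra hne
    rcases Nat.lt_or_ge i j with h | h
    · exact absurd hij (ne_of_lt (tmono i j h (Finset.mem_range.mp hj)))
    · exact absurd hij.symm (ne_of_lt (tmono j i (by omega) (Finset.mem_range.mp hi)))
  rw [Finset.sum_image hinj]
  have hcong : ∑ n ∈ Finset.range (M + 2),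
      |derivWithin f (Set.Ici (t n)) (t n) - derivWithin f (Set.Iic (t n)) (t n)|
      = ∑ n ∈ Finset.range (M + 2), φ n :=
    Finset.sum_congr rfl (fun n hn => hterm n (Finset.mem_range.mp hn))
  rw [hcong, Finset.sum_range_succ' φ (M + 1), Finset.sum_range_succ (fun i => φ (i + 1)) M]
  have h0 : φ 0 = 0 := by simp [hφ]
  have hM1 : φ (M + 1) = 0 := by simp [hφ]
  rw [h0, hM1, add_zero, add_zero]
  refine Finset.sum_congr rfl (fun i hi => ?_)
  have hcond : ¬(i + 1 = 0 ∨ i + 1 = M + 1) := by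
    have := Finset.mem_range.mp hi; omega
  have h3 : φ (i + 1) = |m (i + 1) - m (i + 1 - 1)| := if_neg hcond
  rw [h3]; simp


/-- Among continuous piecewise-affine interpolants with finitely many knots, the
connect-the-dots interpolant minimizes the sum of absolute slope changes, and
the minimum value is `Σ |mₙ₊₁ − mₙ|` where `mₙ` are the data slopes.  Slope
changes are measured as differences of one-sided derivatives. -/
theorem stmt_11 (N : ℕ) (hN : 2 ≤ N) (t y : ℕ → ℝ)
    (ht : ∀ n, n + 1 < N → t n < t (n + 1))
    (m : ℕ → ℝ) (hm : ∀ n, m n = (y (n + 1) - y n) / (t (n + 1) - t n)) :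
    -- the connect-the-dots interpolant attains the value Σ |m (n+1) − m n|
    (∀ f : ℝ → ℝ, Continuous f →
      (∀ n, n < N → f (t n) = y n) →
      (∀ n, n + 1 < N → ∀ x ∈ Set.Icc (t n) (t (n + 1)), f x = y n + m n * (x - t n)) →
      (∀ x ∈ Set.Iic (t 0), f x = y 0 + m 0 * (x - t 0)) →
      (∀ x ∈ Set.Ici (t (N - 1)), f x = y (N - 1) + m (N - 2) * (x - t (N - 1))) →
      ∑ p ∈ Finset.image t (Finset.range N),
          |derivWithin f (Set.Ici p) p - derivWithin f (Set.Iic p) p|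
        = ∑ n ∈ Finset.range (N - 2), |m (n + 1) - m n|) ∧
    -- every continuous piecewise-affine interpolant with finitely many knots does at least as well
    (∀ (f : ℝ → ℝ) (S : Finset ℝ), Continuous f →
      (∀ n, n < N → f (t n) = y n) →
      (∀ x : ℝ, x ∉ (S : Set ℝ) →
        ∃ a c : ℝ, ∀ z ∈ connectedComponentIn ((S : Set ℝ))ᶜ x, f z = a * z + c) →
      ∑ n ∈ Finset.range (N - 2), |m (n + 1) - m n|
        ≤ ∑ p ∈ S, |derivWithin f (Set.Ici p) p - derivWithin f (Set.Iic p) p|) := by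
  constructor
  · intro f _hc _hi hp hl hr
    exact part1 N hN t y ht m f hp hl hr
  · intro f S hc hi hpa
    exact part2 N hN t y ht m hm f S hc hi hpa
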